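/- Let U be an open subset of ℝ^d and f : ℝ^d → ℝ^m. Then the following are equivalent: (1) f is of class C¹ on U (ContDiffOn ℝ 1 f U); (2) there exists a slope extension of f on U, i.e. a function F : ℝ^d × ℝ^d × ℝ → ℝ^m, continuous on U^[1] := {(x,v,t) : x ∈ U, x + t•v ∈ U}, with F(x,v,t) = t⁻¹ • (f(x + t•v) − f(x)) for every (x,v,t) ∈ U^[1] with t ≠ 0. Moreover, under these conditions, for every slope extension F, every x ∈ U and every v ∈ ℝ^d, the differential of f is recovered as fderiv ℝ f x v = F(x,v,0). -/

import Mathlib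

/-- A slope extension of `f` on `U`: a function continuous on the first extended
domain `U^[1] = {(x,v,t) : x ∈ U, x + t•v ∈ U}` that extends the difference
quotient `t⁻¹ • (f(x + t•v) − f(x))`. -/
def IsSlopeExt {E W : Type*} [NormedAddCommGroup E] [NormedSpace ℝ E]
    [NormedAddCommGroup W] [NormedSpace ℝ W]
    (f : E → W) (U : Set E) (F : E × E × ℝ → W) : Prop :=
  ContinuousOn F {p : E × E × ℝ | p.1 ∈ U ∧ p.1 + p.2.2 • p.2.1 ∈ U} ∧
  ∀ p : E × E × ℝ, p.1 ∈ U → p.1 + p.2.2 • p.2.1 ∈ U → p.2.2 ≠ 0 →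
    F p = (p.2.2)⁻¹ • (f (p.1 + p.2.2 • p.2.1) - f p.1)

section Aux

open Filter Topology Asymptotics

variable {E W : Type*} [NormedAddCommGroup E] [NormedSpace ℝ E]
  [NormedAddCommGroup W] [NormedSpace ℝ W]

def slopeDom (U : Set E) : Set (E × E × ℝ) :=
  {p : E × E × ℝ | p.1 ∈ U ∧ p.1 + p.2.2 • p.2.1 ∈ U}

lemma isOpen_slopeDom {U : Set E} (hU : IsOpen U) : IsOpen (slopeDom U) :=
  (hU.preimage continuous_fst).inter
    (hU.preimage (continuous_fst.add (continuous_snd.snd.smul continuous_snd.fst)))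

lemma tendsto_comp_slope {F : E × E × ℝ → W} {U : Set E} (hU : IsOpen U)
    (hF : ContinuousOn F (slopeDom U)) {γ : ℝ → E × E × ℝ} (hγ : Continuous γ)
    (hmem : γ 0 ∈ slopeDom U) :
    Tendsto (fun t => F (γ t)) (𝓝[≠] (0:ℝ)) (𝓝 (F (γ 0))) :=
  ((hF.continuousAt ((isOpen_slopeDom hU).mem_nhds hmem)).comp
    hγ.continuousAt).mono_left nhdsWithin_le_nhds

set_option linter.unusedSectionVars false

/-- Forward direction: a `C¹` function has a slope extension. -/
lemma exists_slopeExt_of_contDiffOn {f : E → W} {U : Set E} (hU : IsOpen U)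
    (hf : ContDiffOn ℝ 1 f U) :
    ∃ F : E × E × ℝ → W, ContinuousOn F (slopeDom U) ∧
      ∀ p : E × E × ℝ, p.1 ∈ U → p.1 + p.2.2 • p.2.1 ∈ U → p.2.2 ≠ 0 →
        F p = (p.2.2)⁻¹ • (f (p.1 + p.2.2 • p.2.1) - f p.1) := by
  classical
  refine ⟨fun p => if p.2.2 = 0 then fderiv ℝ f p.1 p.2.1
      else (p.2.2)⁻¹ • (f (p.1 + p.2.2 • p.2.1) - f p.1), ?_, fun p _ _ ht => by simp [ht]⟩
  set F : E × E × ℝ → W := fun p => if p.2.2 = 0 then fderiv ℝ f p.1 p.2.1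
      else (p.2.2)⁻¹ • (f (p.1 + p.2.2 • p.2.1) - f p.1) with hFdef
  intro p hp
  apply ContinuousAt.continuousWithinAt
  obtain ⟨x₀, v₀, t₀⟩ := p
  obtain ⟨hx₀, hx₀'⟩ := hp
  rcases eq_or_ne t₀ 0 with rfl | h0
  · -- continuity at t = 0
    have hd : HasStrictFDerivAt f (fderiv ℝ f x₀) x₀ :=
      (hf.contDiffAt (hU.mem_nhds hx₀)).hasStrictFDerivAt one_ne_zero
    have hFval : F (x₀, v₀, 0) = fderiv ℝ f x₀ v₀ := by simp [F]
    rw [ContinuousAt, hFval, Metric.tendsto_nhds]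
    intro ε hε
    set c : ℝ := ε / (2 * (‖v₀‖ + 1)) with hc
    have hvpos : (0:ℝ) < ‖v₀‖ + 1 := by positivity
    have hcpos : 0 < c := by positivity
    -- (E1) joint continuity of the derivative part
    have hfd : ContinuousAt (fderiv ℝ f) x₀ :=
      (hf.continuousOn_fderiv_of_isOpen hU le_rfl).continuousAt (hU.mem_nhds hx₀)
    have hcf : ContinuousAt (fun p : E × E × ℝ => fderiv ℝ f p.1 p.2.1) (x₀, v₀, 0) := by
      have h1 : ContinuousAt (fun p : E × E × ℝ => (fderiv ℝ f p.1, p.2.1)) (x₀, v₀, 0) :=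
        (ContinuousAt.comp (x := ((x₀ : E), (v₀ : E), (0:ℝ))) hfd continuousAt_fst).prodMk
          continuousAt_snd.fst
      exact (isBoundedBilinearMap_apply.continuous.continuousAt).comp h1
    have E1 : ∀ᶠ p : E × E × ℝ in 𝓝 (x₀, v₀, 0),
        dist (fderiv ℝ f p.1 p.2.1) (fderiv ℝ f x₀ v₀) < ε :=
      hcf (Metric.ball_mem_nhds _ hε)
    -- (E2) strict differentiability bound
    have hφ : Tendsto (fun p : E × E × ℝ => (p.1 + p.2.2 • p.2.1, p.1))
        (𝓝 (x₀, v₀, 0)) (𝓝 (x₀, x₀)) := by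
      have : Continuous (fun p : E × E × ℝ => (p.1 + p.2.2 • p.2.1, p.1)) :=
        (continuous_fst.add (continuous_snd.snd.smul continuous_snd.fst)).prodMk continuous_fst
      simpa [ContinuousAt] using this.continuousAt (x := ((x₀:E), (v₀:E), (0:ℝ)))
    have E2 : ∀ᶠ p : E × E × ℝ in 𝓝 (x₀, v₀, 0),
        ‖f (p.1 + p.2.2 • p.2.1) - f p.1 - fderiv ℝ f x₀ ((p.1 + p.2.2 • p.2.1) - p.1)‖
          ≤ c * ‖(p.1 + p.2.2 • p.2.1) - p.1‖ :=
      hφ.eventually (hd.isLittleO.def hcpos)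
    -- (E3) norm bound on v
    have E3 : ∀ᶠ p : E × E × ℝ in 𝓝 (x₀, v₀, 0), ‖p.2.1‖ < ‖v₀‖ + 1 := by
      have : Tendsto (fun p : E × E × ℝ => ‖p.2.1‖) (𝓝 (x₀, v₀, 0)) (𝓝 ‖v₀‖) :=
        (continuous_norm.comp continuous_snd.fst).continuousAt
      exact this.eventually_lt_const (lt_add_one _)
    -- (E4) continuity of the linear map at v₀
    have E4 : ∀ᶠ p : E × E × ℝ in 𝓝 (x₀, v₀, 0),
        dist (fderiv ℝ f x₀ p.2.1) (fderiv ℝ f x₀ v₀) < ε / 2 := by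
      have : Tendsto (fun p : E × E × ℝ => fderiv ℝ f x₀ p.2.1) (𝓝 (x₀, v₀, 0))
          (𝓝 (fderiv ℝ f x₀ v₀)) :=
        ((fderiv ℝ f x₀).continuous.comp continuous_snd.fst).continuousAt
      exact this (Metric.ball_mem_nhds _ (by positivity))
    filter_upwards [E1, E2, E3, E4] with p h1 h2 h3 h4
    obtain ⟨x, v, t⟩ := p
    rcases eq_or_ne t 0 with rfl | ht
    · simpa [F] using h1
    · have hFp : F (x, v, t) = t⁻¹ • (f (x + t • v) - f x) := by simp [F, ht]
      rw [dist_eq_norm, hFp]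
      have key : t⁻¹ • (f (x + t • v) - f x) - fderiv ℝ f x₀ v₀
          = t⁻¹ • (f (x + t • v) - f x - fderiv ℝ f x₀ ((x + t • v) - x))
            + (fderiv ℝ f x₀ v - fderiv ℝ f x₀ v₀) := by
        rw [add_sub_cancel_left, (fderiv ℝ f x₀).map_smul, smul_sub, smul_sub,
          inv_smul_smul₀ ht]
        module
      rw [key]
      have b1 : ‖t⁻¹ • (f (x + t • v) - f x - fderiv ℝ f x₀ ((x + t • v) - x))‖ ≤ ε / 2 := by
        rw [norm_smul, norm_inv, Real.norm_eq_abs]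
        simp only [add_sub_cancel_left] at h2 ⊢
        calc |t|⁻¹ * ‖f (x + t • v) - f x - fderiv ℝ f x₀ (t • v)‖
            ≤ |t|⁻¹ * (c * ‖t • v‖) := by
              gcongr
          _ = c * ‖v‖ := by
              rw [norm_smul, Real.norm_eq_abs]
              field_simp
          _ ≤ c * (‖v₀‖ + 1) := by gcongr
          _ = ε / 2 := by rw [hc]; field_simp
      calc ‖_ + (fderiv ℝ f x₀ v - fderiv ℝ f x₀ v₀)‖
          ≤ ‖_‖ + ‖fderiv ℝ f x₀ v - fderiv ℝ f x₀ v₀‖ := norm_add_le _ _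
        _ < ε / 2 + ε / 2 := by
            apply add_lt_add_of_le_of_lt b1
            rwa [← dist_eq_norm]
        _ = ε := by ring
  · -- continuity at t ≠ 0
    have hfc : ContinuousOn f U := hf.continuousOn
    have hG : ContinuousAt (fun p : E × E × ℝ =>
        (p.2.2)⁻¹ • (f (p.1 + p.2.2 • p.2.1) - f p.1)) (x₀, v₀, t₀) := by
      have hinv : ContinuousAt (fun p : E × E × ℝ => (p.2.2)⁻¹) (x₀, v₀, t₀) :=
        continuousAt_snd.snd.inv₀ h0
      have hadd : ContinuousAt (fun p : E × E × ℝ => p.1 + p.2.2 • p.2.1) (x₀, v₀, t₀) :=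
        (continuous_fst.add (continuous_snd.snd.smul continuous_snd.fst)).continuousAt
      have hf1 : ContinuousAt (f ∘ fun p : E × E × ℝ => p.1 + p.2.2 • p.2.1) (x₀, v₀, t₀) :=
        ContinuousAt.comp (hfc.continuousAt (hU.mem_nhds hx₀')) hadd
      have hf2 : ContinuousAt (f ∘ fun p : E × E × ℝ => p.1) (x₀, v₀, t₀) :=
        ContinuousAt.comp (hfc.continuousAt (hU.mem_nhds hx₀)) continuousAt_fst
      exact hinv.smul (hf1.sub hf2)
    apply hG.congr
    have hne : ∀ᶠ p : E × E × ℝ in 𝓝 (x₀, v₀, t₀), p.2.2 ≠ 0 :=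
      continuousAt_snd.snd.eventually_ne h0
    filter_upwards [hne] with p hp
    simp [F, hp]

/-- Any slope extension recovers directional derivatives at `t = 0`. -/
lemma slopeExt_apply_zero {f : E → W} {U : Set E} (hU : IsOpen U)
    {F : E × E × ℝ → W} (hFc : ContinuousOn F (slopeDom U))
    (hFs : ∀ p : E × E × ℝ, p.1 ∈ U → p.1 + p.2.2 • p.2.1 ∈ U → p.2.2 ≠ 0 →
      F p = (p.2.2)⁻¹ • (f (p.1 + p.2.2 • p.2.1) - f p.1))
    {x : E} (hx : x ∈ U) (hdf : DifferentiableAt ℝ f x) (v : E) :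
    fderiv ℝ f x v = F (x, v, 0) := by
  have hmem : ((x, v, 0) : E × E × ℝ) ∈ slopeDom U := by
    constructor <;> simp [hx]
  have hcurve : Tendsto (fun t : ℝ => F (x, v, t)) (𝓝[≠] 0) (𝓝 (F (x, v, 0))) :=
    tendsto_comp_slope hU hFc (by fun_prop) hmem
  -- the slope limit
  have hc : HasDerivAt (fun t : ℝ => x + t • v) v 0 := by
    simpa using ((hasDerivAt_id (0:ℝ)).smul_const v).const_add x
  have hcomp : HasDerivAt (fun t : ℝ => f (x + t • v)) (fderiv ℝ f x v) 0 := by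
    have hdf' : HasFDerivAt f (fderiv ℝ f x) (x + (0:ℝ) • v) := by
      simpa using hdf.hasFDerivAt
    simpa [Function.comp_def] using hdf'.comp_hasDerivAt 0 hc
  have hslope : Tendsto (fun t : ℝ => t⁻¹ • (f (x + t • v) - f x)) (𝓝[≠] 0)
      (𝓝 (fderiv ℝ f x v)) := by
    have := hasDerivAt_iff_tendsto_slope.1 hcomp
    apply this.congr
    intro t
    simp [slope_def_module]
  have heq : ∀ᶠ t in 𝓝[≠] (0:ℝ), F (x, v, t) = t⁻¹ • (f (x + t • v) - f x) := by
    have hmem' : ∀ᶠ t in 𝓝 (0:ℝ), x + t • v ∈ U := by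
      have hco : Continuous (fun t : ℝ => x + t • v) := by fun_prop
      have := hco.continuousAt (x := (0:ℝ)) (hU.mem_nhds (by simpa using hx))
      simpa using hco.continuousAt.eventually_mem (hU.mem_nhds (by simpa using hx))
    filter_upwards [eventually_nhdsWithin_of_eventually_nhds hmem',
      self_mem_nhdsWithin] with t hmemt ht
    exact hFs (x, v, t) hx hmemt ht
  exact tendsto_nhds_unique hslope (hcurve.congr' heq)

section Converse

variable [FiniteDimensional ℝ E]

/-- Linearity of `v ↦ F (x, v, 0)` for a slope extension. -/
lemma slopeExt_linear {f : E → W} {U : Set E} (hU : IsOpen U)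
    {F : E × E × ℝ → W} (hFc : ContinuousOn F (slopeDom U))
    (hFs : ∀ p : E × E × ℝ, p.1 ∈ U → p.1 + p.2.2 • p.2.1 ∈ U → p.2.2 ≠ 0 →
      F p = (p.2.2)⁻¹ • (f (p.1 + p.2.2 • p.2.1) - f p.1))
    {x : E} (hx : x ∈ U) : IsLinearMap ℝ (fun v => F (x, v, 0)) := by
  have hmem : ∀ v : E, ((x, v, 0) : E × E × ℝ) ∈ slopeDom U := fun v => by
    constructor <;> simp [hx]
  have hev : ∀ v : E, ∀ᶠ t in 𝓝 (0:ℝ), x + t • v ∈ U := by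
    intro v
    have hco : Continuous (fun t : ℝ => x + t • v) := by fun_prop
    simpa using hco.continuousAt.eventually_mem (hU.mem_nhds (by simpa using hx))
  constructor
  · -- additivity
    intro v w
    have hL : Tendsto (fun t : ℝ => F (x, v + w, t)) (𝓝[≠] 0) (𝓝 (F (x, v + w, 0))) :=
      tendsto_comp_slope hU hFc (by fun_prop) (hmem _)
    have hR : Tendsto (fun t : ℝ => F (x + t • v, w, t) + F (x, v, t)) (𝓝[≠] 0)
        (𝓝 (F (x, w, 0) + F (x, v, 0))) := by
      have h1 : Tendsto (fun t : ℝ => F (x + t • v, w, t)) (𝓝[≠] 0) (𝓝 (F (x, w, 0))) := by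
        have := tendsto_comp_slope hU hFc
          (γ := fun t : ℝ => (x + t • v, w, t)) (by fun_prop) (by simpa using hmem w)
        simpa using this
      have h2 : Tendsto (fun t : ℝ => F (x, v, t)) (𝓝[≠] 0) (𝓝 (F (x, v, 0))) :=
        tendsto_comp_slope hU hFc (by fun_prop) (hmem _)
      exact h1.add h2
    have heq : ∀ᶠ t in 𝓝[≠] (0:ℝ),
        F (x, v + w, t) = F (x + t • v, w, t) + F (x, v, t) := by
      filter_upwards [eventually_nhdsWithin_of_eventually_nhds (hev v),
        eventually_nhdsWithin_of_eventually_nhds (hev (v + w)),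
        self_mem_nhdsWithin] with t h1 h2 ht
      have e1 : F (x, v + w, t) = t⁻¹ • (f (x + t • (v + w)) - f x) := hFs _ hx h2 ht
      have key : x + t • v + t • w = x + t • (v + w) := by
        rw [smul_add, add_assoc]
      have e2 : F (x + t • v, w, t) = t⁻¹ • (f (x + t • (v + w)) - f (x + t • v)) := by
        have := hFs (x + t • v, w, t) h1 (by simpa [key] using h2) ht
        simpa [key] using this
      have e3 : F (x, v, t) = t⁻¹ • (f (x + t • v) - f x) := hFs _ hx h1 ht
      rw [e1, e2, e3, ← smul_add, sub_add_sub_cancel]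
    have := tendsto_nhds_unique (hL.congr' heq) hR
    rw [this, add_comm]
  · -- homogeneity
    intro c v
    rcases eq_or_ne c 0 with rfl | hc
    · -- c = 0 : F (x, 0, 0) = 0
      simp only [zero_smul]
      have hL : Tendsto (fun t : ℝ => F (x, (0:E), t)) (𝓝[≠] 0) (𝓝 (F (x, 0, 0))) :=
        tendsto_comp_slope hU hFc (by fun_prop) (hmem _)
      have heq : ∀ᶠ t in 𝓝[≠] (0:ℝ), F (x, (0:E), t) = 0 := by
        filter_upwards [self_mem_nhdsWithin] with t ht
        have := hFs (x, (0:E), t) hx (by simpa using hx) ht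
        simpa using this
      have : Tendsto (fun _ : ℝ => (0:W)) (𝓝[≠] (0:ℝ)) (𝓝 (F (x, 0, 0))) :=
        hL.congr' heq
      exact (tendsto_nhds_unique this tendsto_const_nhds)
    · have hL : Tendsto (fun t : ℝ => F (x, c • v, t)) (𝓝[≠] 0) (𝓝 (F (x, c • v, 0))) :=
        tendsto_comp_slope hU hFc (by fun_prop) (hmem _)
      have hR : Tendsto (fun t : ℝ => c • F (x, v, c * t)) (𝓝[≠] 0)
          (𝓝 (c • F (x, v, 0))) := by
        have := tendsto_comp_slope hU hFc
          (γ := fun t : ℝ => ((x : E), (v : E), c * t)) (by fun_prop) (by simpa using hmem v)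
        simpa using this.const_smul c
      have heq : ∀ᶠ t in 𝓝[≠] (0:ℝ), F (x, c • v, t) = c • F (x, v, c * t) := by
        have hev' : ∀ᶠ t in 𝓝 (0:ℝ), x + (c * t) • v ∈ U := by
          have hco : Continuous (fun t : ℝ => x + (c * t) • v) := by fun_prop
          simpa using hco.continuousAt.eventually_mem (hU.mem_nhds (by simpa using hx))
        filter_upwards [eventually_nhdsWithin_of_eventually_nhds hev',
          self_mem_nhdsWithin] with t h1 ht
        have key : x + t • (c • v) = x + (c * t) • v := by
          rw [smul_smul, mul_comm]
        have e1 : F (x, c • v, t) = t⁻¹ • (f (x + (c * t) • v) - f x) := by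
          have := hFs (x, c • v, t) hx (by simpa [key] using h1) ht
          simpa [key] using this
        have e2 : F (x, v, c * t) = (c * t)⁻¹ • (f (x + (c * t) • v) - f x) :=
          hFs (x, v, c * t) hx h1 (mul_ne_zero hc ht)
        rw [e1, e2, smul_smul, mul_inv, ← mul_assoc, mul_inv_cancel₀ hc, one_mul]
      exact tendsto_nhds_unique (hL.congr' heq) hR

end Converse

/-- A slope extension yields differentiability, with derivative `v ↦ F (x, v, 0)`. -/
lemma hasFDerivAt_of_slopeExt [FiniteDimensional ℝ E] {f : E → W} {U : Set E} (hU : IsOpen U)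
    {F : E × E × ℝ → W} (hFc : ContinuousOn F (slopeDom U))
    (hFs : ∀ p : E × E × ℝ, p.1 ∈ U → p.1 + p.2.2 • p.2.1 ∈ U → p.2.2 ≠ 0 →
      F p = (p.2.2)⁻¹ • (f (p.1 + p.2.2 • p.2.1) - f p.1))
    {x : E} (hx : x ∈ U) :
    ∃ L : E →L[ℝ] W, HasFDerivAt f L x ∧ ∀ v, L v = F (x, v, 0) := by
  have hlin := slopeExt_linear hU hFc hFs hx
  set L : E →L[ℝ] W := LinearMap.toContinuousLinearMap (IsLinearMap.mk' _ hlin) with hLdef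
  have hLv : ∀ v, L v = F (x, v, 0) := fun v => rfl
  refine ⟨L, ?_, hLv⟩
  rw [hasFDerivAt_iff_tendsto, Metric.tendsto_nhds]
  intro ε hε
  -- tube lemma: uniform smallness of F (x, u, t) - F (x, u, 0) over the unit sphere
  have hψ1 : ContinuousOn (fun q : E × ℝ => F (x, q.1, q.2))
      {q : E × ℝ | ((x, q.1, q.2) : E × E × ℝ) ∈ slopeDom U} := by
    apply hFc.comp (by fun_prop : Continuous fun q : E × ℝ => ((x, q.1, q.2) : E × E × ℝ)).continuousOn
    intro q hq
    exact hq
  have hψ2 : ContinuousOn (fun q : E × ℝ => F (x, q.1, 0))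
      {q : E × ℝ | ((x, q.1, q.2) : E × E × ℝ) ∈ slopeDom U} := by
    apply hFc.comp (by fun_prop : Continuous fun q : E × ℝ => ((x, q.1, (0:ℝ)) : E × E × ℝ)).continuousOn
    intro q hq
    constructor <;> simp [hx]
  have hT : IsOpen {q : E × ℝ | ((x, q.1, q.2) : E × E × ℝ) ∈ slopeDom U} :=
    (isOpen_slopeDom hU).preimage (by fun_prop)
  set N : Set (E × ℝ) := {q : E × ℝ | ((x, q.1, q.2) : E × E × ℝ) ∈ slopeDom U} ∩
    (fun q : E × ℝ => ‖F (x, q.1, q.2) - F (x, q.1, 0)‖) ⁻¹' Set.Iio ε with hNdef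
  have hNopen : IsOpen N :=
    ContinuousOn.isOpen_inter_preimage ((hψ1.sub hψ2).norm) hT isOpen_Iio
  have hsub : Metric.sphere (0:E) 1 ×ˢ ({0} : Set ℝ) ⊆ N := by
    rintro ⟨u, t⟩ ⟨-, ht⟩
    simp only [Set.mem_singleton_iff] at ht
    subst ht
    refine ⟨⟨hx, by simpa using hx⟩, ?_⟩
    simpa using hε
  obtain ⟨A, B, -, hBopen, hKA, h0B, hABN⟩ :=
    generalized_tube_lemma (isCompact_sphere (0:E) 1) isCompact_singleton hNopen hsub
  obtain ⟨δ, hδpos, hδB⟩ := Metric.isOpen_iff.1 hBopen 0 (h0B rfl)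
  filter_upwards [hU.eventually_mem hx, Metric.ball_mem_nhds x hδpos] with x' hx' hx'δ
  rcases eq_or_ne x' x with rfl | hne
  · simpa using hε
  · have hh : x' - x ≠ 0 := sub_ne_zero_of_ne hne
    set h : E := x' - x with hhdef
    set u : E := ‖h‖⁻¹ • h with hudef
    have hnorm : (0:ℝ) < ‖h‖ := norm_pos_iff.2 hh
    have hu : u ∈ Metric.sphere (0:E) 1 := by
      simp only [mem_sphere_iff_norm, sub_zero, hudef, norm_smul, norm_inv, norm_norm]
      field_simp
    have htu : ‖h‖ • u = h := by
      rw [hudef, smul_smul, mul_inv_cancel₀ hnorm.ne', one_smul]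
    have hmemN : (u, ‖h‖) ∈ N := by
      apply hABN
      refine ⟨hKA hu, hδB ?_⟩
      simp only [Metric.mem_ball, Real.dist_eq, sub_zero, abs_of_pos hnorm]
      calc ‖h‖ = dist x' x := by rw [hhdef, dist_eq_norm]
        _ < δ := hx'δ
    obtain ⟨⟨-, hmemU⟩, hlt⟩ := hmemN
    rw [htu] at hmemU
    have hxh : x + h ∈ U := by
      have : x + h = x' := by rw [hhdef]; abel
      rwa [this]
    have hxx' : x + h = x' := by rw [hhdef]; abel
    have hFu : F (x, u, ‖h‖) = ‖h‖⁻¹ • (f x' - f x) := by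
      have h2 := hFs (x, u, ‖h‖) hx (by rwa [htu]) hnorm.ne'
      simpa [htu, hxx'] using h2
    have hF0 : F (x, u, 0) = ‖h‖⁻¹ • L h := by
      rw [← hLv u, hudef, L.map_smul]
    have hexpr : ‖x' - x‖⁻¹ * ‖f x' - f x - L (x' - x)‖
        = ‖F (x, u, ‖h‖) - F (x, u, 0)‖ := by
      rw [hFu, hF0, ← smul_sub, norm_smul, norm_inv, norm_norm, ← hhdef]
    rw [Real.dist_eq, sub_zero, abs_of_nonneg (by positivity), hexpr]
    simpa using hlt

lemma contDiffOn_of_slopeExt [FiniteDimensional ℝ E] {f : E → W} {U : Set E} (hU : IsOpen U)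
    {F : E × E × ℝ → W} (hFc : ContinuousOn F (slopeDom U))
    (hFs : ∀ p : E × E × ℝ, p.1 ∈ U → p.1 + p.2.2 • p.2.1 ∈ U → p.2.2 ≠ 0 →
      F p = (p.2.2)⁻¹ • (f (p.1 + p.2.2 • p.2.1) - f p.1)) :
    ContDiffOn ℝ 1 f U := by
  have hdiff : ∀ x ∈ U, ∃ L : E →L[ℝ] W, HasFDerivAt f L x ∧ ∀ v, L v = F (x, v, 0) :=
    fun x hx => hasFDerivAt_of_slopeExt hU hFc hFs hx
  have h1 : DifferentiableOn ℝ f U := fun x hx =>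
    ((hdiff x hx).choose_spec.1.differentiableAt).differentiableWithinAt
  have h2 : ContinuousOn (fderiv ℝ f) U := by
    rw [continuousOn_clm_apply]
    intro v
    have heq : ∀ x ∈ U, fderiv ℝ f x v = F (x, v, 0) := by
      intro x hx
      obtain ⟨L, hL, hLv⟩ := hdiff x hx
      rw [hL.fderiv, hLv]
    apply ContinuousOn.congr _ heq
    exact hFc.comp (by fun_prop : Continuous fun x : E => ((x, v, (0:ℝ)) : E × E × ℝ)).continuousOn
      (fun x hx => ⟨hx, by simpa using hx⟩)
  rw [show (1 : WithTop ℕ∞) = 0 + 1 by norm_num, contDiffOn_succ_iff_fderiv_of_isOpen hU]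
  refine ⟨h1, by simp, contDiffOn_zero.2 h2⟩

end Aux

/-- `f : ℝ^d → ℝ^m` is `C¹` on an open set `U` iff its difference quotient
extends to a continuous map on `U^[1]`; in that case any such extension recovers
the differential at `t = 0`. -/
theorem C1_iff_slope_extension {d m : ℕ}
    (U : Set (EuclideanSpace ℝ (Fin d))) (hU : IsOpen U)
    (f : EuclideanSpace ℝ (Fin d) → EuclideanSpace ℝ (Fin m)) :
    (ContDiffOn ℝ 1 f U ↔ ∃ F, IsSlopeExt f U F) ∧
    (ContDiffOn ℝ 1 f U →
      ∀ F, IsSlopeExt f U F →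
        ∀ x ∈ U, ∀ v, fderiv ℝ f x v = F (x, v, 0)) := by
  constructor
  · constructor
    · intro hf
      obtain ⟨F, h1, h2⟩ := exists_slopeExt_of_contDiffOn hU hf
      exact ⟨F, h1, h2⟩
    · rintro ⟨F, hFc, hFs⟩
      exact contDiffOn_of_slopeExt hU hFc hFs
  · intro hf F hF x hx v
    have hdf : DifferentiableAt ℝ f x :=
      (hf.differentiableOn one_ne_zero).differentiableAt (hU.mem_nhds hx)
    exact slopeExt_apply_zero hU hF.1 hF.2 hx hdf v
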